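/- arXiv:1504.01993 — 2 statements merged into one kernel-verified Lean document; each statement's English description precedes it below -/
import Mathlib

section
/- Let (p1,q1), (p2,q2), (p3,q3) be pairs of integers satisfying −p_n q_{n+1} + p_{n+1} q_n = −1 for n = 1, 2, 3 (indices mod 3). Then exactly one of the three products p1·p2, p2·p3, p3·p1 is odd; equivalently, exactly two of the products are even. -/
set_option synthInstance.maxHeartbeats 1000000 in
set_option synthInstance.maxSize 2000 in
set_option maxRecDepth 10000 in
private lemma zmod2_aux (a b c x y z : ZMod 2)
    (h1 : -a * y + b * x = 1) (h2 : -b * z + c * y = 1) (h3 : -c * x + a * z = 1) :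
    (a * b = 1 ∧ ¬ b * c = 1 ∧ ¬ c * a = 1) ∨
    (¬ a * b = 1 ∧ b * c = 1 ∧ ¬ c * a = 1) ∨
    (¬ a * b = 1 ∧ ¬ b * c = 1 ∧ c * a = 1) := by
  revert h1 h2 h3; revert a b c x y z; decide

private lemma odd_iff_zmod2 (m : ℤ) : Odd m ↔ (m : ZMod 2) = 1 := by
  constructor
  · rintro ⟨k, rfl⟩; push_cast; ring_nf
    rw [show (2 : ZMod 2) = 0 by decide]; ring
  · intro h
    rcases Int.even_or_odd m with he | ho
    · exfalso
      obtain ⟨k, rfl⟩ := he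
      push_cast at h
      have : (k : ZMod 2) + k = 0 := by
        ring_nf; rw [show (2 : ZMod 2) = 0 by decide]; ring
      rw [this] at h; exact one_ne_zero h.symm
    · exact ho

/-- If `(p₁,q₁), (p₂,q₂), (p₃,q₃)` are pairs of integers with
`-pₙ q_{n+1} + p_{n+1} qₙ = -1` for `n = 1,2,3` (indices mod 3), then exactly one of
the three products `p₁p₂`, `p₂p₃`, `p₃p₁` is odd (equivalently, exactly two are even). -/
theorem exactly_one_product_odd_of_cyclic_surgery_triple
    (p1 q1 p2 q2 p3 q3 : ℤ)
    (h1 : -p1 * q2 + p2 * q1 = -1)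
    (h2 : -p2 * q3 + p3 * q2 = -1)
    (h3 : -p3 * q1 + p1 * q3 = -1) :
    (Odd (p1 * p2) ∧ ¬ Odd (p2 * p3) ∧ ¬ Odd (p3 * p1)) ∨
    (¬ Odd (p1 * p2) ∧ Odd (p2 * p3) ∧ ¬ Odd (p3 * p1)) ∨
    (¬ Odd (p1 * p2) ∧ ¬ Odd (p2 * p3) ∧ Odd (p3 * p1)) := by
  have e1 := congrArg (Int.cast : ℤ → ZMod 2) h1
  have e2 := congrArg (Int.cast : ℤ → ZMod 2) h2
  have e3 := congrArg (Int.cast : ℤ → ZMod 2) h3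
  push_cast at e1 e2 e3
  rw [show (-1 : ZMod 2) = 1 by decide] at e1 e2 e3
  simp only [odd_iff_zmod2, Int.cast_mul]
  exact zmod2_aux _ _ _ _ _ _ e1 e2 e3
end

section
/- In an abstract Gysin sequence, if M_{k−1} = 0, M_k ≅ F2, and M_{k+1} = 0, then either (increasing case) dim S_{k+1} = dim S_k = a+1 and dim S_{k−1} = a with π : M_k → S_k injective, or (decreasing case) dim S_{k+1} = a−1, dim S_k = dim S_{k−1} = a with ι : S_k → M_k nonzero, where a ≥ 0 in the first case and a ≥ 1 in the second. -/
open DirectSum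

theorem graded_mem_map
    {A B : Type} [AddCommGroup A] [Module (ZMod 2) A]
    [AddCommGroup B] [Module (ZMod 2) B]
    (gA : ℤ → Submodule (ZMod 2) A) (gB : ℤ → Submodule (ZMod 2) B)
    (hA : DirectSum.IsInternal gA) (hB : DirectSum.IsInternal gB)
    (f : A →ₗ[ZMod 2] B) (d : ℤ) (hf : ∀ i, (gA i).map f ≤ gB (i + d))
    {j : ℤ} {x : B} (hx : x ∈ gB j) (y : A) (hxy : f y = x) :
    x ∈ (gA (j - d)).map f := by
  classical
  letI := hA.chooseDecomposition
  letI := hB.chooseDecomposition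
  set s := (decompose gA y).support with hs
  have hy : y = ∑ i ∈ s, ((decompose gA y) i : A) :=
    (DirectSum.sum_support_decompose gA y).symm
  have hsum : x = ∑ i ∈ s, f ((decompose gA y) i : A) := by
    rw [← hxy]; conv_lhs => rw [hy]
    rw [map_sum]
  have hmem : ∀ i : ℤ, f ((decompose gA y) i : A) ∈ gB (i + d) := fun i =>
    hf i ⟨_, ((decompose gA y) i).2, rfl⟩
  have hkey : x = ∑ i ∈ s, ((decompose gB (f ((decompose gA y) i : A)) j : B)) := by
    calc x = (decompose gB x j : B) := (decompose_of_mem_same gB hx).symm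
    _ = (decompose gB (∑ i ∈ s, f ((decompose gA y) i : A)) j : B) := by rw [← hsum]
    _ = _ := by
        rw [DirectSum.decompose_sum, DFinsupp.finset_sum_apply]
        push_cast
        rfl
  have hterm : ∀ i ∈ s,
      ((decompose gB (f ((decompose gA y) i : A)) j : B)) =
        if i = j - d then f ((decompose gA y) i : A) else 0 := by
    intro i _
    by_cases h : i = j - d
    · subst h
      rw [if_pos rfl]
      have hmm := hmem (j - d)
      rw [show j - d + d = j by omega] at hmm
      exact decompose_of_mem_same gB hmm
    · rw [if_neg h]
      exact decompose_of_mem_ne gB (hmem i) (by omega)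
  rw [Finset.sum_congr rfl hterm, Finset.sum_ite_eq' s (j - d)] at hkey
  by_cases h : j - d ∈ s
  · rw [if_pos h] at hkey
    exact ⟨_, ((decompose gA y) (j - d)).2, hkey.symm⟩
  · rw [if_neg h] at hkey
    exact hkey ▸ ⟨0, (gA (j - d)).zero_mem, map_zero f⟩

theorem rank_split {V W : Type} [AddCommGroup V] [Module (ZMod 2) V]
    [AddCommGroup W] [Module (ZMod 2) W]
    (p q : Submodule (ZMod 2) V) [FiniteDimensional (ZMod 2) ↥p]
    (f : V →ₗ[ZMod 2] W) (hq : q ≤ p) (hker : ∀ x ∈ p, (f x = 0 ↔ x ∈ q)) :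
    Module.finrank (ZMod 2) ↥p =
      Module.finrank (ZMod 2) ↥(p.map f) + Module.finrank (ZMod 2) ↥q := by
  set g := f ∘ₗ p.subtype with hg
  have hrange : LinearMap.range g = p.map f := by
    rw [hg, LinearMap.range_comp, Submodule.range_subtype]
  have hkerg : LinearMap.ker g = q.comap p.subtype := by
    ext ⟨x, hx⟩
    simpa [hg, LinearMap.mem_ker] using hker x hx
  have h1 := LinearMap.finrank_range_add_finrank_ker g
  rw [hrange, hkerg, (Submodule.comapSubtypeEquivOfLe hq).finrank_eq] at h1
  omega

/-- increasing/decreasing dichotomy. Consider an abstract Gysin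
sequence: graded `F₂`-vector spaces `S`, `M` (realized as gradings `gS`, `gM` on
ambient modules) with a long exact sequence
`... → S_j →^ι M_j →^π S_j →^e S_{j-1} → ...` in which `ι`, `π` have degree `0` and
`e` has degree `-1`, all graded pieces being finite-dimensional.  If `M_{k-1} = 0`,
`M_k ≅ F₂` and `M_{k+1} = 0`, then either (increasing case)
`dim S_{k+1} = dim S_k = a+1`, `dim S_{k-1} = a` and `π : M_k → S_k` is injective,
or (decreasing case) `dim S_{k+1} = a-1`, `dim S_k = dim S_{k-1} = a` with `a ≥ 1`
and `ι` is nonzero on `S_k`. -/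
theorem gysin_increasing_or_decreasing
    {SS MM : Type} [AddCommGroup SS] [Module (ZMod 2) SS]
    [AddCommGroup MM] [Module (ZMod 2) MM]
    (gS : ℤ → Submodule (ZMod 2) SS) (gM : ℤ → Submodule (ZMod 2) MM)
    (hSinternal : DirectSum.IsInternal gS)
    (hMinternal : DirectSum.IsInternal gM)
    (hSfin : ∀ i, FiniteDimensional (ZMod 2) ↥(gS i))
    (hMfin : ∀ i, FiniteDimensional (ZMod 2) ↥(gM i))
    (eMap : SS →ₗ[ZMod 2] SS) (iMap : SS →ₗ[ZMod 2] MM) (pMap : MM →ₗ[ZMod 2] SS)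
    (hedeg : ∀ i, (gS i).map eMap ≤ gS (i - 1))
    (hideg : ∀ i, (gS i).map iMap ≤ gM i)
    (hpdeg : ∀ i, (gM i).map pMap ≤ gS i)
    (hexact1 : Function.Exact ⇑eMap ⇑iMap)
    (hexact2 : Function.Exact ⇑iMap ⇑pMap)
    (hexact3 : Function.Exact ⇑pMap ⇑eMap)
    (k : ℤ)
    (hMkm : gM (k - 1) = ⊥)
    (hMk : Module.finrank (ZMod 2) ↥(gM k) = 1)
    (hMkp : gM (k + 1) = ⊥) :
    (∃ a : ℕ,
      Module.finrank (ZMod 2) ↥(gS (k + 1)) = a + 1 ∧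
      Module.finrank (ZMod 2) ↥(gS k) = a + 1 ∧
      Module.finrank (ZMod 2) ↥(gS (k - 1)) = a ∧
      ∀ x ∈ gM k, pMap x = 0 → x = 0) ∨
    (∃ a : ℕ, 1 ≤ a ∧
      Module.finrank (ZMod 2) ↥(gS (k + 1)) = a - 1 ∧
      Module.finrank (ZMod 2) ↥(gS k) = a ∧
      Module.finrank (ZMod 2) ↥(gS (k - 1)) = a ∧
      ∃ x ∈ gS k, iMap x ≠ 0) := by
  classical
  haveI := hSfin (k + 1); haveI := hSfin k; haveI := hSfin (k - 1); haveI := hMfin k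
  -- degree conditions rephrased for the key lemma (e has degree -1, i.e. d = -1)
  have hedeg' : ∀ i, (gS i).map eMap ≤ gS (i + (-1)) := by
    intro i; rw [show i + (-1) = i - 1 by omega]; exact hedeg i
  have hideg' : ∀ i, (gS i).map iMap ≤ gM (i + 0) := by
    intro i; rw [show i + (0:ℤ) = i by omega]; exact hideg i
  have hpdeg' : ∀ i, (gM i).map pMap ≤ gS (i + 0) := by
    intro i; rw [show i + (0:ℤ) = i by omega]; exact hpdeg i
  set E1 := (gS (k + 1)).map eMap with hE1
  set I0 := (gS k).map iMap with hI0
  set P0 := (gM k).map pMap with hP0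
  have hE1le : E1 ≤ gS k := by
    have := hedeg (k + 1); rwa [show k + 1 - 1 = k by omega] at this
  have hI0le : I0 ≤ gM k := hideg k
  have hP0le : P0 ≤ gS k := hpdeg k
  haveI : FiniteDimensional (ZMod 2) ↥E1 := Submodule.finiteDimensional_of_le hE1le
  haveI : FiniteDimensional (ZMod 2) ↥I0 := Submodule.finiteDimensional_of_le hI0le
  haveI : FiniteDimensional (ZMod 2) ↥P0 := Submodule.finiteDimensional_of_le hP0le
  -- e is injective on gS (k+1)
  have hker_e1 : ∀ x ∈ gS (k + 1), (eMap x = 0 ↔ x ∈ (⊥ : Submodule (ZMod 2) SS)) := by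
    intro x hx
    constructor
    · intro h
      obtain ⟨y, hy⟩ := (hexact3 x).mp h
      have := graded_mem_map gM gS hMinternal hSinternal pMap 0 hpdeg' hx y hy
      rw [show k + 1 - 0 = k + 1 by omega, hMkp, Submodule.map_bot] at this
      exact this
    · intro h
      rw [Submodule.mem_bot] at h; simp [h]
  -- kernel of i on gS k is E1
  have hker_i : ∀ x ∈ gS k, (iMap x = 0 ↔ x ∈ E1) := by
    intro x hx
    constructor
    · intro h
      obtain ⟨y, hy⟩ := (hexact1 x).mp h
      have := graded_mem_map gS gS hSinternal hSinternal eMap (-1) hedeg' hx y hy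
      rwa [show k - (-1) = k + 1 by omega] at this
    · rintro ⟨y, _, rfl⟩
      exact (hexact1 (eMap y)).mpr ⟨y, rfl⟩
  -- kernel of p on gM k is I0
  have hker_p : ∀ x ∈ gM k, (pMap x = 0 ↔ x ∈ I0) := by
    intro x hx
    constructor
    · intro h
      obtain ⟨y, hy⟩ := (hexact2 x).mp h
      have := graded_mem_map gS gM hSinternal hMinternal iMap 0 hideg' hx y hy
      rwa [show k - 0 = k by omega] at this
    · rintro ⟨y, _, rfl⟩
      exact (hexact2 (iMap y)).mpr ⟨y, rfl⟩
  -- kernel of e on gS k is P0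
  have hker_e0 : ∀ x ∈ gS k, (eMap x = 0 ↔ x ∈ P0) := by
    intro x hx
    constructor
    · intro h
      obtain ⟨y, hy⟩ := (hexact3 x).mp h
      have := graded_mem_map gM gS hMinternal hSinternal pMap 0 hpdeg' hx y hy
      rwa [show k - 0 = k by omega] at this
    · rintro ⟨y, _, rfl⟩
      exact (hexact3 (pMap y)).mpr ⟨y, rfl⟩
  -- e maps gS k onto gS (k-1)
  have hsurj : (gS k).map eMap = gS (k - 1) := by
    apply le_antisymm (hedeg k)
    intro x hx
    have hix : iMap x = 0 := by
      have := hideg (k - 1) ⟨x, hx, rfl⟩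
      rwa [hMkm, Submodule.mem_bot] at this
    obtain ⟨y, hy⟩ := (hexact1 x).mp hix
    have := graded_mem_map gS gS hSinternal hSinternal eMap (-1) hedeg' hx y hy
    rwa [show k - 1 - (-1) = k by omega] at this
  -- the four rank equations
  have r1 := rank_split (gS (k + 1)) ⊥ eMap bot_le hker_e1
  have r2 := rank_split (gS k) E1 iMap hE1le hker_i
  have r3 := rank_split (gM k) I0 pMap hI0le hker_p
  have r4 := rank_split (gS k) P0 eMap hP0le hker_e0
  rw [← hE1] at r1
  rw [← hI0] at r2
  rw [← hP0] at r3
  rw [hsurj] at r4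
  rw [hMk] at r3
  rw [finrank_bot (ZMod 2) _] at r1
  set n1 := Module.finrank (ZMod 2) ↥(gS (k + 1)) with hn1
  set n0 := Module.finrank (ZMod 2) ↥(gS k) with hn0
  set nm := Module.finrank (ZMod 2) ↥(gS (k - 1)) with hnm
  have hBle : Module.finrank (ZMod 2) ↥I0 ≤ 1 := by omega
  rcases Nat.lt_or_ge (Module.finrank (ZMod 2) ↥I0) 1 with hB | hB
  · -- I0 = ⊥ : increasing case
    have hB0 : Module.finrank (ZMod 2) ↥I0 = 0 := by omega
    left
    refine ⟨nm, by omega, by omega, rfl, ?_⟩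
    intro x hx hpx
    have hxI0 : x ∈ I0 := (hker_p x hx).mp hpx
    have : I0 = ⊥ := Submodule.finrank_eq_zero.mp hB0
    rwa [this, Submodule.mem_bot] at hxI0
  · -- finrank I0 = 1 : decreasing case
    have hB1 : Module.finrank (ZMod 2) ↥I0 = 1 := by omega
    right
    refine ⟨n0, by omega, by omega, rfl, by omega, ?_⟩
    by_contra hcon
    push_neg at hcon
    have : I0 = ⊥ := by
      rw [eq_bot_iff]
      rintro x ⟨y, hy, rfl⟩
      rw [Submodule.mem_bot]
      exact hcon y hy
    rw [this, finrank_bot (ZMod 2) _] at hB1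
    omega
end
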